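/- arXiv:2310.10448 — 2 statements merged into one kernel-verified Lean document; each statement's English description precedes it below -/
import Mathlib

section
/- Let G be a compact topological group with its (bi-invariant) Haar probability measure μ, V a finite-dimensional normed complex vector space, and ρ : G → GL(V) a representation such that g ↦ ρ(g)⁻¹ v is continuous for every v ∈ V. Let P be a set with a right G-action, k : P × P → ℝ a kernel invariant under the diagonal action, i.e. k(p · g, q · g) = k(p, q) for all p, q ∈ P and g ∈ G, and assume g ↦ k(p, q · g) is continuous for all p, q. Let J be a finite index set, (p_j)_{j∈J} points of P, and (w_j)_{j∈J} ∈ V. Define the message m : P → V by m(p) := ∫_G ∑_{j∈J} k(p, p_j · g) ρ(g)⁻¹ w_j dμ(g). Then m is (ρ,G)-equivariant: for all p ∈ P and g₀ ∈ G, m(p · g₀) = ρ(g₀)⁻¹ m(p). -/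
open MeasureTheory

/-- Let `G` be a compact topological group with bi-invariant
Haar probability measure `μ`, `V` a finite-dimensional normed complex vector
space, `ρ : G → GL(V)` a representation with `g ↦ ρ(g)⁻¹ v` continuous, `P` a
set with a right `G`-action, and `k : P × P → ℝ` a diagonally invariant kernel
(`k (p·g) (q·g) = k p q`) with `g ↦ k p (q·g)` continuous.  For finitely many
points `pⱼ ∈ P` and vectors `wⱼ ∈ V`, the message
`m p = ∫_G ∑ⱼ k p (pⱼ·g) • ρ(g)⁻¹ wⱼ dμ(g)` is `(ρ,G)`-equivariant:
`m (p·g₀) = ρ(g₀)⁻¹ (m p)`. -/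
theorem stmt_10 {G P V J : Type*} [Group G] [TopologicalSpace G]
    [IsTopologicalGroup G] [CompactSpace G] [MeasurableSpace G] [BorelSpace G]
    [NormedAddCommGroup V] [NormedSpace ℂ V] [FiniteDimensional ℂ V]
    [Fintype J]
    (μ : Measure G) [μ.IsHaarMeasure] [IsProbabilityMeasure μ]
    [μ.IsMulRightInvariant]
    (ρ : G →* LinearMap.GeneralLinearGroup ℂ V)
    (hρ : ∀ v : V, Continuous fun g : G => (↑(ρ g)⁻¹ : V →ₗ[ℂ] V) v)
    (act : P → G → P)
    (act_one : ∀ p, act p 1 = p)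
    (act_mul : ∀ p g₁ g₂, act p (g₁ * g₂) = act (act p g₁) g₂)
    (k : P → P → ℝ)
    (hkinv : ∀ (p q : P) (g : G), k (act p g) (act q g) = k p q)
    (hkcont : ∀ p q : P, Continuous fun g : G => k p (act q g))
    (pj : J → P) (w : J → V)
    (m : P → V)
    (hm : ∀ p : P,
      m p = ∫ g, (∑ j : J, k p (act (pj j) g) • (↑(ρ g)⁻¹ : V →ₗ[ℂ] V) (w j)) ∂μ)
    (p : P) (g₀ : G) :
    m (act p g₀) = (↑(ρ g₀)⁻¹ : V →ₗ[ℂ] V) (m p) := by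
  have hk' : ∀ (j : J) (g : G), k (act p g₀) (act (pj j) g)
      = k p (act (pj j) (g * g₀⁻¹)) := by
    intro j g
    have := hkinv (act p g₀) (act (pj j) g) g₀⁻¹
    rw [← act_mul, ← act_mul, mul_inv_cancel, act_one] at this
    exact this.symm
  rw [hm, hm]
  -- change of variable g ↦ g * g₀
  have hcv : (∫ g, (∑ j : J, k (act p g₀) (act (pj j) g) • (↑(ρ g)⁻¹ : V →ₗ[ℂ] V) (w j)) ∂μ)
      = ∫ g, (∑ j : J, k (act p g₀) (act (pj j) (g * g₀)) • (↑(ρ (g * g₀))⁻¹ : V →ₗ[ℂ] V) (w j)) ∂μ :=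
    (integral_mul_right_eq_self
      (fun g => ∑ j : J, k (act p g₀) (act (pj j) g) • (↑(ρ g)⁻¹ : V →ₗ[ℂ] V) (w j)) g₀).symm
  rw [hcv]
  set L : V →L[ℂ] V := LinearMap.toContinuousLinearMap (↑(ρ g₀)⁻¹ : V →ₗ[ℂ] V)
  have heq : ∀ g : G, (∑ j : J, k (act p g₀) (act (pj j) (g * g₀)) • (↑(ρ (g * g₀))⁻¹ : V →ₗ[ℂ] V) (w j))
      = L (∑ j : J, k p (act (pj j) g) • (↑(ρ g)⁻¹ : V →ₗ[ℂ] V) (w j)) := by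
    intro g
    rw [map_sum]
    refine Finset.sum_congr rfl fun j _ => ?_
    rw [hk' j (g * g₀), mul_inv_cancel_right, map_mul, mul_inv_rev]
    simp only [L, LinearMap.coe_toContinuousLinearMap', Units.val_mul, Module.End.mul_apply]
    exact (LinearMap.map_smul_of_tower (↑(ρ g₀)⁻¹ : V →ₗ[ℂ] V) _ _).symm
  simp only [heq]
  have hint : Integrable (fun g => ∑ j : J, k p (act (pj j) g) • (↑(ρ g)⁻¹ : V →ₗ[ℂ] V) (w j)) μ := by
    apply Continuous.integrable_of_hasCompactSupport
    · exact continuous_finset_sum _ fun j _ => ((hkcont p (pj j)).smul (hρ (w j)))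
    · exact HasCompactSupport.of_compactSpace _
  rw [L.integral_comp_comm hint]
  rfl
end

section
/- Let G be a compact topological group with Haar probability measure μ, V a finite-dimensional normed complex vector space, ρ : G → GL(V) a representation such that g ↦ ρ(g)⁻¹ v is continuous for every v ∈ V, P a set with a right G-action, and k : P × P → ℝ a diagonally invariant kernel (k(p·g, q·g) = k(p,q)) with g ↦ k(p, q·g) continuous. Let n ≥ 1, let J be a finite index set with points (p_j)_{j∈J} of P and vectors (w_j)_{j∈J} in V, and define the higher-order message m : P → V^{⊗n} by m(p) := ∫_G (ρ(g)⁻¹)^{⊗n} ( ⊗_{ξ=1}^{n} ( ∑_{j∈J} k(p, p_j · g) w_j ) ) dμ(g), where (ρ(g)⁻¹)^{⊗n} acts on V^{⊗n} as the n-fold tensor power. Then m is equivariant for the tensor power representation: for all p ∈ P and g₀ ∈ G, m(p · g₀) = (ρ(g₀)⁻¹)^{⊗n} m(p). -/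
open MeasureTheory

/-- Let `G` be a compact topological group with bi-invariant
Haar probability measure `μ`, `V` a finite-dimensional normed complex vector
space with `n`-th tensor power `V^⊗n` (read in a finite-dimensional normed
model `T ≃ₗ V^⊗n`), `ρ : G → GL(V)` a representation with `g ↦ ρ(g)⁻¹ v`
continuous, `P` a set with a right `G`-action, and `k : P × P → ℝ` a diagonally
invariant kernel with `g ↦ k p (q·g)` continuous.  For `n ≥ 1`, finitely many
points `pⱼ ∈ P` and vectors `wⱼ ∈ V`, the higher-order message
`m p = ∫_G (ρ(g)⁻¹)^⊗n (⊗_{ξ=1}^n ∑ⱼ k p (pⱼ·g) wⱼ) dμ(g)` is equivariant for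
the tensor power representation: `m (p·g₀) = (ρ(g₀)⁻¹)^⊗n (m p)`. -/
theorem stmt_11 {G P V T J : Type*} [Group G] [TopologicalSpace G]
    [IsTopologicalGroup G] [CompactSpace G] [MeasurableSpace G] [BorelSpace G]
    [NormedAddCommGroup V] [NormedSpace ℂ V] [FiniteDimensional ℂ V]
    [NormedAddCommGroup T] [NormedSpace ℂ T] [FiniteDimensional ℂ T]
    [Fintype J]
    (n : ℕ) (hn : 1 ≤ n)
    (e : PiTensorProduct ℂ (fun _ : Fin n => V) ≃ₗ[ℂ] T)
    (μ : Measure G) [μ.IsHaarMeasure] [IsProbabilityMeasure μ]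
    [μ.IsMulRightInvariant]
    (ρ : G →* LinearMap.GeneralLinearGroup ℂ V)
    (hρ : ∀ v : V, Continuous fun g : G => (↑(ρ g)⁻¹ : V →ₗ[ℂ] V) v)
    (act : P → G → P)
    (act_one : ∀ p, act p 1 = p)
    (act_mul : ∀ p g₁ g₂, act p (g₁ * g₂) = act (act p g₁) g₂)
    (k : P → P → ℝ)
    (hkinv : ∀ (p q : P) (g : G), k (act p g) (act q g) = k p q)
    (hkcont : ∀ p q : P, Continuous fun g : G => k p (act q g))
    (pj : J → P) (w : J → V)
    (m : P → T)
    (hm : ∀ p : P,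
      m p = ∫ g, e
        ((PiTensorProduct.map fun _ : Fin n => (↑(ρ g)⁻¹ : V →ₗ[ℂ] V))
          (PiTensorProduct.tprod ℂ
            fun _ : Fin n => ∑ j : J, k p (act (pj j) g) • w j)) ∂μ)
    (p : P) (g₀ : G) :
    m (act p g₀) =
      e ((PiTensorProduct.map fun _ : Fin n => (↑(ρ g₀)⁻¹ : V →ₗ[ℂ] V))
        (e.symm (m p))) := by
  classical
  set s : P → G → V := fun q g => ∑ j : J, k q (act (pj j) g) • w j with hs
  set F : P → G → T := fun q g =>
    e ((PiTensorProduct.map fun _ : Fin n => (↑(ρ g)⁻¹ : V →ₗ[ℂ] V))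
      (PiTensorProduct.tprod ℂ fun _ : Fin n => s q g)) with hF
  let M : MultilinearMap ℂ (fun _ : Fin n => V) T :=
    e.toLinearMap.compMultilinearMap (PiTensorProduct.tprod ℂ)
  have hFM : ∀ q g,
      F q g = M fun _ : Fin n => (↑(ρ g)⁻¹ : V →ₗ[ℂ] V) (s q g) := by
    intro q g
    simp [hF, M, PiTensorProduct.map_tprod]
  -- continuity of M along a continuous path with equal slots
  have hMcont : ∀ u : G → V, Continuous u →
      Continuous fun g => M fun _ : Fin n => u g := by
    intro u hu
    set b := Module.finBasis ℂ V with hb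
    have hrw : (fun g => M fun _ : Fin n => u g) =
        fun g => ∑ r : Fin n → Fin (Module.finrank ℂ V),
          (∏ i : Fin n, b.repr (u g) (r i)) • M fun i => b (r i) := by
      funext g
      have h1 : (fun _ : Fin n => u g)
          = fun _ : Fin n => ∑ t : Fin (Module.finrank ℂ V),
              b.repr (u g) t • b t := by
        funext i; exact (b.sum_repr (u g)).symm
      rw [h1, MultilinearMap.map_sum]
      exact Finset.sum_congr rfl fun r _ => M.map_smul_univ _ _
    rw [hrw]
    refine continuous_finset_sum _ fun r _ => Continuous.smul ?_ continuous_const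
    refine continuous_finset_prod _ fun i _ => ?_
    have : Continuous fun v : V => b.coord (r i) v :=
      (b.coord (r i)).continuous_of_finiteDimensional
    simpa [Module.Basis.coord_apply, Function.comp_def] using this.comp hu
  have hucont : ∀ q : P,
      Continuous fun g => (↑(ρ g)⁻¹ : V →ₗ[ℂ] V) (s q g) := by
    intro q
    have h1 : (fun g => (↑(ρ g)⁻¹ : V →ₗ[ℂ] V) (s q g))
        = fun g => ∑ j : J,
            k q (act (pj j) g) • (↑(ρ g)⁻¹ : V →ₗ[ℂ] V) (w j) := by
      funext g
      simp [hs, map_sum, LinearMap.map_smul_of_tower]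
    rw [h1]
    exact continuous_finset_sum _ fun j _ => (hkcont q (pj j)).smul (hρ (w j))
  have hFcont : ∀ q, Continuous (F q) := by
    intro q
    have : F q = fun g => M fun _ : Fin n => (↑(ρ g)⁻¹ : V →ₗ[ℂ] V) (s q g) :=
      funext (hFM q)
    rw [this]
    exact hMcont _ (hucont q)
  have hFint : ∀ q, Integrable (F q) μ := fun q =>
    (hFcont q).integrable_of_hasCompactSupport (HasCompactSupport.of_compactSpace _)
  -- the continuous linear operator implementing (ρ g₀)⁻¹ tensor power on T
  let A : T →L[ℂ] T := LinearMap.toContinuousLinearMap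
    (e.toLinearMap ∘ₗ
      (PiTensorProduct.map fun _ : Fin n => (↑(ρ g₀)⁻¹ : V →ₗ[ℂ] V)) ∘ₗ
      e.symm.toLinearMap)
  have hA : ∀ t : T, A t =
      e ((PiTensorProduct.map fun _ : Fin n => (↑(ρ g₀)⁻¹ : V →ₗ[ℂ] V))
        (e.symm t)) := fun t => rfl
  -- kernel shift
  have hker : ∀ (j : J) (g : G),
      k (act p g₀) (act (pj j) g) = k p (act (pj j) (g * g₀⁻¹)) := by
    intro j g
    have h2 : act (act (pj j) (g * g₀⁻¹)) g₀ = act (pj j) g := by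
      rw [← act_mul, inv_mul_cancel_right]
    calc k (act p g₀) (act (pj j) g)
        = k (act p g₀) (act (act (pj j) (g * g₀⁻¹)) g₀) := by rw [h2]
      _ = k p (act (pj j) (g * g₀⁻¹)) := hkinv _ _ _
  have hsshift : ∀ g : G, s (act p g₀) g = s p (g * g₀⁻¹) := by
    intro g
    simp only [hs]
    exact Finset.sum_congr rfl fun j _ => by rw [hker j g]
  -- composition of the tensor-power action
  have hcomp : ∀ g : G, (↑(ρ (g * g₀))⁻¹ : V →ₗ[ℂ] V)
      = (↑(ρ g₀)⁻¹ : V →ₗ[ℂ] V) ∘ₗ (↑(ρ g)⁻¹ : V →ₗ[ℂ] V) := by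
    intro g
    have h1 : (ρ (g * g₀))⁻¹ = (ρ g₀)⁻¹ * (ρ g)⁻¹ := by
      rw [map_mul, mul_inv_rev]
    rw [h1]
    rfl
  set H : G → T := fun g =>
    e ((PiTensorProduct.map fun _ : Fin n => (↑(ρ (g * g₀))⁻¹ : V →ₗ[ℂ] V))
      (PiTensorProduct.tprod ℂ fun _ : Fin n => s p g)) with hH
  have hFH : ∀ g : G, F (act p g₀) g = H (g * g₀⁻¹) := by
    intro g
    simp only [hF, hH, hsshift g, inv_mul_cancel_right]
  have hHA : ∀ g : G, H g = A (F p g) := by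
    intro g
    simp only [hH, hF, hA, LinearEquiv.symm_apply_apply]
    congr 1
    rw [hcomp g]
    rw [show (PiTensorProduct.map fun _ : Fin n =>
        (↑(ρ g₀)⁻¹ : V →ₗ[ℂ] V) ∘ₗ (↑(ρ g)⁻¹ : V →ₗ[ℂ] V)) =
        (PiTensorProduct.map fun _ : Fin n => (↑(ρ g₀)⁻¹ : V →ₗ[ℂ] V)) ∘ₗ
        (PiTensorProduct.map fun _ : Fin n => (↑(ρ g)⁻¹ : V →ₗ[ℂ] V)) from
      PiTensorProduct.map_comp _ _]
    rfl
  calc m (act p g₀) = ∫ g, F (act p g₀) g ∂μ := hm _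
    _ = ∫ g, H (g * g₀⁻¹) ∂μ := by simp_rw [hFH]
    _ = ∫ g, H g ∂μ := integral_mul_right_eq_self H g₀⁻¹
    _ = ∫ g, A (F p g) ∂μ := by simp_rw [hHA]
    _ = A (∫ g, F p g ∂μ) := A.integral_comp_comm (hFint p)
    _ = A (m p) := by rw [← hm p]
    _ = _ := hA _
end
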